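/- Let q and g be independent standard Gaussian random variables. Then for every s ∈ ℝ and every r > 0, E[min(|q| − |r·g + s·q|, 0)²] = (1/π)·[((1−s)² + r²)·(π/2 − arctan((1−s)/r)) + ((1+s)² + r²)·(π/2 − arctan((1+s)/r)) − 2r]. -/

import Mathlib

open MeasureTheory ProbabilityTheory

open Real Set Filter Topology
open scoped NNReal ENNReal

section AuxLemmas

/-- Integrability of the core rational function on all of ℝ. -/
lemma integrable_core (a : ℝ) :
    Integrable (fun t : ℝ => (t - a) ^ 2 / (1 + t ^ 2) ^ 2) := by
  have hc : Continuous fun t : ℝ => (t - a) ^ 2 / (1 + t ^ 2) ^ 2 := by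
    apply Continuous.div (by continuity) (by continuity)
    intro t; positivity
  refine ((integrable_inv_one_add_sq.const_mul (2 * a ^ 2 + 2)).mono'
    hc.aestronglyMeasurable (ae_of_all _ fun t => ?_))
  rw [Real.norm_eq_abs, abs_of_nonneg (by positivity), div_le_iff₀ (by positivity)]
  have h : (2 * a ^ 2 + 2) * (1 + t ^ 2)⁻¹ * (1 + t ^ 2) ^ 2
      = (2 * a ^ 2 + 2) * (1 + t ^ 2) := by
    field_simp
  rw [h]
  nlinarith [sq_nonneg (a + t), sq_nonneg (a * t), sq_nonneg t, sq_nonneg a]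

/-- The core improper integral. -/
lemma core_integral_eq (a : ℝ) :
    ∫ t in Ioi a, (t - a) ^ 2 / (1 + t ^ 2) ^ 2
      = (1 + a ^ 2) / 2 * (π / 2 - arctan a) - a / 2 := by
  set F : ℝ → ℝ := fun t => (1 + a ^ 2) / 2 * arctan t + ((a ^ 2 - 1) * t / 2 + a) / (1 + t ^ 2)
  have hderiv : ∀ t ∈ Ici a, HasDerivAt F ((t - a) ^ 2 / (1 + t ^ 2) ^ 2) t := by
    intro t _
    have h1 : HasDerivAt arctan (1 / (1 + t ^ 2)) t := hasDerivAt_arctan t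
    have hN : HasDerivAt (fun t : ℝ => (a ^ 2 - 1) * t / 2 + a) ((a ^ 2 - 1) / 2) t := by
      simpa using (((hasDerivAt_id t).const_mul (a ^ 2 - 1)).div_const 2).add_const a
    have hD : HasDerivAt (fun t : ℝ => 1 + t ^ 2) (2 * t) t := by
      simpa using (hasDerivAt_pow 2 t).const_add 1
    have hd0 : (1 + t ^ 2 : ℝ) ≠ 0 := by positivity
    have h2 := hN.div hD hd0
    have := (h1.const_mul ((1 + a ^ 2) / 2)).add h2
    refine this.congr_deriv ?_
    rw [mul_one_div, div_add_div _ _ (by positivity) (by positivity),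
      div_eq_div_iff (by positivity) (by positivity)]
    ring
  have htend : Tendsto F atTop (𝓝 ((1 + a ^ 2) / 2 * (π / 2) + 0)) := by
    have h1 : Tendsto (fun t : ℝ => (1 + a ^ 2) / 2 * arctan t) atTop
        (𝓝 ((1 + a ^ 2) / 2 * (π / 2))) :=
      (tendsto_nhds_of_tendsto_nhdsWithin tendsto_arctan_atTop).const_mul _
    have h2 : Tendsto (fun t : ℝ => ((a ^ 2 - 1) * t / 2 + a) / (1 + t ^ 2)) atTop (𝓝 0) := by
      have ht : Tendsto (fun t : ℝ => t / (1 + t ^ 2)) atTop (𝓝 0) := by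
        have h3 : Tendsto (fun t : ℝ => t⁻¹ + t) atTop atTop :=
          tendsto_inv_atTop_zero.add_atTop tendsto_id
        have h4 := h3.inv_tendsto_atTop
        refine h4.congr' ?_
        filter_upwards [eventually_ge_atTop (1 : ℝ)] with t ht
        have htne : t ≠ 0 := by linarith
        show (t⁻¹ + t)⁻¹ = t / (1 + t ^ 2)
        rw [show t⁻¹ + t = (1 + t ^ 2) / t by
          rw [add_div, one_div, pow_two, mul_div_assoc, div_self htne, mul_one], inv_div]
      have hs : Tendsto (fun t : ℝ => 1 / (1 + t ^ 2)) atTop (𝓝 0) := by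
        have h5 : Tendsto (fun t : ℝ => 1 + t ^ 2) atTop atTop :=
          tendsto_atTop_add_const_left _ 1 (tendsto_pow_atTop two_ne_zero)
        simpa [one_div, Pi.inv_def] using h5.inv_tendsto_atTop
      have := ((ht.const_mul ((a ^ 2 - 1) / 2)).add (hs.const_mul a))
      simp only [mul_zero, add_zero] at this
      refine this.congr fun t => ?_
      field_simp
    simpa using h1.add h2
  have key := integral_Ioi_of_hasDerivAt_of_tendsto' hderiv
    ((integrable_core a).integrableOn) htend
  rw [key]
  have hd0 : (1 + a ^ 2 : ℝ) ≠ 0 := by positivity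
  simp only [F]
  field_simp
  ring

lemma min_sq_eq (r a t : ℝ) (hr : 0 ≤ r) :
    (min (-(r * (t - a))) 0) ^ 2 = r ^ 2 * (max (t - a) 0) ^ 2 := by
  rcases le_total t a with h | h
  · rw [min_eq_right (by nlinarith : (0:ℝ) ≤ -(r * (t - a))),
      max_eq_right (by linarith : t - a ≤ 0)]
    ring
  · rw [min_eq_left (by nlinarith : -(r * (t - a)) ≤ 0),
      max_eq_left (by linarith : (0:ℝ) ≤ t - a)]
    ring

lemma integrable_maxcore (a : ℝ) :
    Integrable (fun t : ℝ => (max (t - a) 0) ^ 2 / (1 + t ^ 2) ^ 2) := by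
  refine (integrable_core a).mono' ?_ (ae_of_all _ fun t => ?_)
  · have : Continuous fun t : ℝ => (max (t - a) 0) ^ 2 / (1 + t ^ 2) ^ 2 := by
      apply Continuous.div (by continuity) (by continuity)
      intro t; positivity
    exact this.aestronglyMeasurable
  · rw [Real.norm_eq_abs,
      abs_of_nonneg (div_nonneg (sq_nonneg _) (by positivity))]
    have hnum : (max (t - a) 0) ^ 2 ≤ (t - a) ^ 2 := by
      rcases le_total (t - a) 0 with h | h
      · rw [max_eq_right h]; nlinarith [sq_nonneg (t - a)]
      · rw [max_eq_left h]
    exact div_le_div_of_nonneg_right hnum (by positivity)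

lemma maxcore_integral_eq (a : ℝ) :
    ∫ t : ℝ, (max (t - a) 0) ^ 2 / (1 + t ^ 2) ^ 2
      = (1 + a ^ 2) / 2 * (π / 2 - arctan a) - a / 2 := by
  have h0 : ∀ t ∉ Ioi a, (max (t - a) 0) ^ 2 / (1 + t ^ 2) ^ 2 = 0 := by
    intro t ht
    rw [max_eq_right (by simp only [mem_Ioi, not_lt] at ht; linarith : t - a ≤ 0)]
    simp
  calc ∫ t : ℝ, (max (t - a) 0) ^ 2 / (1 + t ^ 2) ^ 2
      = ∫ t in Ioi a, (max (t - a) 0) ^ 2 / (1 + t ^ 2) ^ 2 :=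
        (setIntegral_eq_integral_of_forall_compl_eq_zero h0).symm
    _ = ∫ t in Ioi a, (t - a) ^ 2 / (1 + t ^ 2) ^ 2 :=
        setIntegral_congr_fun measurableSet_Ioi fun t ht => by
          rw [max_eq_left (by simp only [mem_Ioi] at ht; linarith : (0:ℝ) ≤ t - a)]
    _ = _ := core_integral_eq a

lemma half_line (r c : ℝ) (hr : 0 < r) :
    ∫ t : ℝ, (min (1 - (r * t + c)) 0) ^ 2 / (1 + t ^ 2) ^ 2
      = ((1 - c) ^ 2 + r ^ 2) / 2 * (π / 2 - arctan ((1 - c) / r)) - r * (1 - c) / 2 := by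
  set a : ℝ := (1 - c) / r with ha
  have hra : r * a = 1 - c := by rw [ha]; field_simp
  have h1 : ∀ t : ℝ, (min (1 - (r * t + c)) 0) ^ 2 / (1 + t ^ 2) ^ 2
      = r ^ 2 * ((max (t - a) 0) ^ 2 / (1 + t ^ 2) ^ 2) := by
    intro t
    have h : 1 - (r * t + c) = -(r * (t - a)) := by rw [mul_sub, hra]; ring
    rw [h, min_sq_eq r a t hr.le, mul_div_assoc]
  rw [funext h1, integral_const_mul, maxcore_integral_eq a]
  have h2 : r ^ 2 * ((1 + a ^ 2) / 2) = ((1 - c) ^ 2 + r ^ 2) / 2 := by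
    rw [ha]; field_simp; ring
  have h3 : r ^ 2 * a = r * (1 - c) := by
    rw [ha]; field_simp
  linear_combination (π / 2 - arctan a) * h2 - h3 / 2

lemma min_abs_split (u : ℝ) :
    (min (1 - |u|) 0) ^ 2 = (min (1 - u) 0) ^ 2 + (min (1 + u) 0) ^ 2 := by
  rcases le_total 0 u with h | h
  · rw [abs_of_nonneg h, min_eq_right (by linarith : (0:ℝ) ≤ 1 + u)]
    ring
  · rw [abs_of_nonpos h, min_eq_right (by linarith : (0:ℝ) ≤ 1 - u)]
    have : 1 - -u = 1 + u := by ring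
    rw [this]
    ring

lemma integrable_piece (r c : ℝ) (hr : 0 < r) :
    Integrable (fun t : ℝ => (min (1 - (r * t + c)) 0) ^ 2 / (1 + t ^ 2) ^ 2) := by
  have hra : r * ((1 - c) / r) = 1 - c := by field_simp
  have h1 : ∀ t : ℝ, (min (1 - (r * t + c)) 0) ^ 2 / (1 + t ^ 2) ^ 2
      = r ^ 2 * ((max (t - (1 - c) / r) 0) ^ 2 / (1 + t ^ 2) ^ 2) := by
    intro t
    have h : 1 - (r * t + c) = -(r * (t - (1 - c) / r)) := by rw [mul_sub, hra]; ring
    rw [h, min_sq_eq r _ t hr.le, mul_div_assoc]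
  rw [funext h1]
  exact (integrable_maxcore _).const_mul _

lemma full_line (r s : ℝ) (hr : 0 < r) :
    ∫ t : ℝ, (min (1 - |r * t + s|) 0) ^ 2 / (1 + t ^ 2) ^ 2
      = (((1 - s) ^ 2 + r ^ 2) * (π / 2 - arctan ((1 - s) / r))
          + ((1 + s) ^ 2 + r ^ 2) * (π / 2 - arctan ((1 + s) / r)) - 2 * r) / 2 := by
  have hsplit : ∀ t : ℝ, (min (1 - |r * t + s|) 0) ^ 2 / (1 + t ^ 2) ^ 2
      = (min (1 - (r * t + s)) 0) ^ 2 / (1 + t ^ 2) ^ 2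
        + (min (1 + (r * t + s)) 0) ^ 2 / (1 + t ^ 2) ^ 2 := by
    intro t
    rw [← add_div, ← min_abs_split (r * t + s)]
  rw [funext hsplit]
  have hi2 : Integrable (fun t : ℝ => (min (1 + (r * t + s)) 0) ^ 2 / (1 + t ^ 2) ^ 2) := by
    have h := (integrable_piece r (-s) hr).comp_neg
    refine h.congr (ae_of_all _ fun t => ?_)
    have h2 : 1 - (r * -t + -s) = 1 + (r * t + s) := by ring
    have h3 : ((-t : ℝ)) ^ 2 = t ^ 2 := by ring
    simp only [h2, h3]
  rw [integral_add (integrable_piece r s hr) hi2]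
  have e2 : ∫ t : ℝ, (min (1 + (r * t + s)) 0) ^ 2 / (1 + t ^ 2) ^ 2
      = ∫ t : ℝ, (min (1 - (r * t + -s)) 0) ^ 2 / (1 + t ^ 2) ^ 2 := by
    rw [← integral_neg_eq_self (fun t : ℝ => (min (1 - (r * t + -s)) 0) ^ 2 / (1 + t ^ 2) ^ 2)]
    congr 1
    ext t
    have h : 1 - (r * -t + -s) = 1 + (r * t + s) := by ring
    have h3 : ((-t : ℝ)) ^ 2 = t ^ 2 := by ring
    rw [h, h3]
  rw [e2, half_line r s hr, half_line r (-s) hr]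
  have h4 : 1 - -s = 1 + s := by ring
  rw [h4]
  ring

lemma angular_half (r s : ℝ) :
    ∫ θ in Ioo (-(π/2)) (π/2), (min (|cos θ| - |r * sin θ + s * cos θ|) 0) ^ 2
      = ∫ t : ℝ, (min (1 - |r * t + s|) 0) ^ 2 / (1 + t ^ 2) ^ 2 := by
  have hCoV := integral_image_eq_integral_abs_deriv_smul measurableSet_Ioo
    (fun x (hx : x ∈ Ioo (-(π/2)) (π/2)) =>
      (hasDerivAt_tan_of_mem_Ioo hx).hasDerivWithinAt)
    injOn_tan (fun t => (min (1 - |r * t + s|) 0) ^ 2 / (1 + t ^ 2) ^ 2)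
  rw [image_tan_Ioo, Measure.restrict_univ] at hCoV
  rw [hCoV]
  refine setIntegral_congr_fun measurableSet_Ioo fun θ hθ => ?_
  have hc : 0 < cos θ := cos_pos_of_mem_Ioo hθ
  have hc0 : cos θ ≠ 0 := hc.ne'
  have h1 : (1 + tan θ ^ 2) = (cos θ ^ 2)⁻¹ := by
    rw [← inv_one_add_tan_sq hc0, inv_inv]
  have hsin : sin θ = tan θ * cos θ := (tan_mul_cos hc0).symm
  have habs : |cos θ| = cos θ := abs_of_pos hc
  have h2 : r * sin θ + s * cos θ = cos θ * (r * tan θ + s) := by rw [hsin]; ring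
  have h3 : |r * sin θ + s * cos θ| = cos θ * |r * tan θ + s| := by
    rw [h2, abs_mul, habs]
  have h4 : |cos θ| - |r * sin θ + s * cos θ| = cos θ * (1 - |r * tan θ + s|) := by
    rw [habs, h3]; ring
  have h5 : min (|cos θ| - |r * sin θ + s * cos θ|) 0 = cos θ * min (1 - |r * tan θ + s|) 0 := by
    rw [h4, mul_min_of_nonneg _ _ hc.le, mul_zero]
  rw [smul_eq_mul, h1, h5]
  rw [abs_of_nonneg (by positivity : (0:ℝ) ≤ 1 / cos θ ^ 2)]
  field_simp

lemma angular_full (r s : ℝ) :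
    ∫ θ in Ioo (-π) π, (min (|cos θ| - |r * sin θ + s * cos θ|) 0) ^ 2
      = 2 * ∫ θ in Ioo (-(π/2)) (π/2), (min (|cos θ| - |r * sin θ + s * cos θ|) 0) ^ 2 := by
  set G : ℝ → ℝ := fun θ => (min (|cos θ| - |r * sin θ + s * cos θ|) 0) ^ 2 with hG
  have hGc : Continuous G := by
    apply Continuous.pow
    apply Continuous.min _ continuous_const
    apply Continuous.sub
    · exact continuous_cos.abs
    · exact ((continuous_const.mul continuous_sin).add
        (continuous_const.mul continuous_cos)).abs
  have hint : ∀ a b : ℝ, IntervalIntegrable G volume a b := fun a b =>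
    hGc.intervalIntegrable a b
  have hper1 : ∀ x : ℝ, G (x - π) = G x := by
    intro x
    simp only [hG, cos_sub_pi, sin_sub_pi]
    have h : r * -sin x + s * -cos x = -(r * sin x + s * cos x) := by ring
    rw [h, abs_neg, abs_neg]
  have hper2 : ∀ x : ℝ, G (x + π) = G x := by
    intro x
    simp only [hG, cos_add_pi, sin_add_pi]
    have h : r * -sin x + s * -cos x = -(r * sin x + s * cos x) := by ring
    rw [h, abs_neg, abs_neg]
  have hIoo : ∀ a b : ℝ, a ≤ b → ∫ θ in Ioo a b, G θ = ∫ θ in a..b, G θ := by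
    intro a b hab
    rw [intervalIntegral.integral_of_le hab, integral_Ioc_eq_integral_Ioo]
  have hpi := pi_pos
  rw [hIoo _ _ (by linarith), hIoo _ _ (by linarith)]
  have e1 : ∫ x in (-π)..(-(π/2)), G x = ∫ x in (0:ℝ)..(π/2), G x := by
    have h := intervalIntegral.integral_comp_sub_right (a := 0) (b := π/2) G π
    rw [show (0:ℝ) - π = -π by ring, show π/2 - π = -(π/2) by ring] at h
    simp only [hper1] at h
    exact h.symm
  have e2 : ∫ x in (π/2)..π, G x = ∫ x in (-(π/2))..(0:ℝ), G x := by
    have h := intervalIntegral.integral_comp_add_right (a := -(π/2)) (b := 0) G π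
    rw [show -(π/2) + π = π/2 by ring, show (0:ℝ) + π = π by ring] at h
    simp only [hper2] at h
    exact h.symm
  rw [← intervalIntegral.integral_add_adjacent_intervals (hint (-π) (-(π/2))) (hint (-(π/2)) π),
    ← intervalIntegral.integral_add_adjacent_intervals (hint (-(π/2)) (π/2)) (hint (π/2) π),
    e1, e2]
  have e3 : (∫ x in (-(π/2))..(0:ℝ), G x) + ∫ x in (0:ℝ)..(π/2), G x
      = ∫ x in (-(π/2))..(π/2), G x :=
    intervalIntegral.integral_add_adjacent_intervals (hint _ _) (hint _ _)
  linarith [e3]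

lemma radial_integrableOn :
    IntegrableOn (fun ρ : ℝ => ρ ^ 3 * Real.exp (-ρ ^ 2 / 2)) (Ioi 0) := by
  have h := integrableOn_rpow_mul_exp_neg_mul_sq (b := 1/2) (by norm_num)
    (s := 3) (by norm_num)
  refine h.congr_fun (fun x hx => ?_) measurableSet_Ioi
  rw [← rpow_natCast x 3]
  norm_num
  left
  ring_nf

lemma radial_integral_eq :
    ∫ ρ in Ioi (0:ℝ), ρ ^ 3 * Real.exp (-ρ ^ 2 / 2) = 2 := by
  have hderiv : ∀ x ∈ Ici (0:ℝ),
      HasDerivAt (fun ρ : ℝ => -(ρ ^ 2 + 2) * Real.exp (-ρ ^ 2 / 2))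
        (x ^ 3 * Real.exp (-x ^ 2 / 2)) x := by
    intro x _
    have h1 : HasDerivAt (fun ρ : ℝ => -(ρ ^ 2 + 2)) (-(2 * x)) x := by
      simpa [Pi.neg_def] using (((hasDerivAt_pow 2 x).add_const 2).neg)
    have h2 : HasDerivAt (fun ρ : ℝ => Real.exp (-ρ ^ 2 / 2)) 
        (Real.exp (-x ^ 2 / 2) * (-(2 * x) / 2)) x := by
      have h3 : HasDerivAt (fun ρ : ℝ => -ρ ^ 2 / 2) (-(2 * x) / 2) x := by
        simpa using (((hasDerivAt_pow 2 x).neg).div_const 2)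
      exact (Real.hasDerivAt_exp _).comp x h3
    have := h1.mul h2
    exact this.congr_deriv (by ring)
  have htend : Tendsto (fun ρ : ℝ => -(ρ ^ 2 + 2) * Real.exp (-ρ ^ 2 / 2)) atTop (𝓝 0) := by
    have hsq : Tendsto (fun ρ : ℝ => ρ ^ 2 / 2) atTop atTop :=
      (tendsto_pow_atTop two_ne_zero).atTop_div_const (by norm_num)
    have h1 : Tendsto (fun ρ : ℝ => (ρ ^ 2 / 2) * Real.exp (-(ρ ^ 2 / 2))) atTop (𝓝 0) := by
      have := (tendsto_pow_mul_exp_neg_atTop_nhds_zero 1).comp hsq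
      simpa [Function.comp_def] using this
    have h2 : Tendsto (fun ρ : ℝ => Real.exp (-(ρ ^ 2 / 2))) atTop (𝓝 0) :=
      Real.tendsto_exp_neg_atTop_nhds_zero.comp hsq
    have := ((h1.const_mul (-2)).add (h2.const_mul (-2)))
    simp only [mul_zero, add_zero] at this
    refine this.congr (fun ρ => ?_) |>.mono_left le_rfl
    ring_nf
  have key := integral_Ioi_of_hasDerivAt_of_tendsto' hderiv radial_integrableOn htend
  rw [key]
  norm_num

lemma gaussian_prod_eq_withDensity :
    (gaussianReal 0 1).prod (gaussianReal 0 1)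
      = (volume : Measure (ℝ × ℝ)).withDensity
          (fun p => gaussianPDF 0 1 p.1 * gaussianPDF 0 1 p.2) := by
  haveI : IsProbabilityMeasure (volume.withDensity (gaussianPDF 0 1)) := by
    rw [← gaussianReal_of_var_ne_zero 0 one_ne_zero]; infer_instance
  rw [gaussianReal_of_var_ne_zero 0 one_ne_zero, Measure.volume_eq_prod]
  refine Measure.prod_eq fun s t hs ht => ?_
  rw [withDensity_apply _ (hs.prod ht), ← Measure.prod_restrict,
    lintegral_prod_mul (f := gaussianPDF 0 1) (g := gaussianPDF 0 1)
      (measurable_gaussianPDF 0 1).aemeasurable (measurable_gaussianPDF 0 1).aemeasurable,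
    withDensity_apply _ hs, withDensity_apply _ ht]

end AuxLemmas

/-- Let `q` and `g` be independent standard Gaussian random
variables.  Then for every `s ∈ ℝ` and every `r > 0`,
`E[min(|q| − |r·g + s·q|, 0)²]
  = (1/π)·[((1−s)² + r²)(π/2 − arctan((1−s)/r))
           + ((1+s)² + r²)(π/2 − arctan((1+s)/r)) − 2r]`. -/
theorem expectation_min_sq_gaussian {Ω : Type*} [MeasurableSpace Ω]
    (μ : Measure Ω) [IsProbabilityMeasure μ] (q g : Ω → ℝ)
    (hq : Measurable q) (hg : Measurable g) (hind : IndepFun q g μ)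
    (hqd : μ.map q = gaussianReal 0 1) (hgd : μ.map g = gaussianReal 0 1)
    (s r : ℝ) (hr : 0 < r) :
    ∫ ω, (min (|q ω| - |r * g ω + s * q ω|) 0) ^ 2 ∂μ =
      (1 / Real.pi) *
        (((1 - s) ^ 2 + r ^ 2) * (Real.pi / 2 - Real.arctan ((1 - s) / r)) +
          ((1 + s) ^ 2 + r ^ 2) * (Real.pi / 2 - Real.arctan ((1 + s) / r)) -
          2 * r) := by
  have hpdf_nonneg : ∀ x : ℝ, 0 ≤ gaussianPDFReal 0 1 x := gaussianPDFReal_nonneg 0 1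
  set F : ℝ × ℝ → ℝ := fun p => (min (|p.1| - |r * p.2 + s * p.1|) 0) ^ 2 with hF
  have hFc : Continuous F := by
    apply Continuous.pow
    apply Continuous.min _ continuous_const
    exact (continuous_fst.abs).sub
      (((continuous_const.mul continuous_snd).add
        (continuous_const.mul continuous_fst)).abs)
  have hmap : μ.map (fun ω => (q ω, g ω)) = (gaussianReal 0 1).prod (gaussianReal 0 1) := by
    have h := (indepFun_iff_map_prod_eq_prod_map_map hq.aemeasurable hg.aemeasurable).mp hind
    rw [hqd, hgd] at h
    exact h
  have step1 : ∫ ω, (min (|q ω| - |r * g ω + s * q ω|) 0) ^ 2 ∂μ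
      = ∫ p, F p ∂((gaussianReal 0 1).prod (gaussianReal 0 1)) := by
    rw [← hmap, integral_map (hq.prodMk hg).aemeasurable hFc.aestronglyMeasurable]
  rw [step1]
  -- switch to Lebesgue integral with density
  set n : ℝ × ℝ → ℝ≥0 :=
    fun p => (gaussianPDFReal 0 1 p.1).toNNReal * (gaussianPDFReal 0 1 p.2).toNNReal with hn
  have hnm : Measurable n :=
    (((measurable_gaussianPDFReal 0 1).comp measurable_fst).real_toNNReal).mul
      (((measurable_gaussianPDFReal 0 1).comp measurable_snd).real_toNNReal)
  have hprod : (gaussianReal 0 1).prod (gaussianReal 0 1)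
      = (volume : Measure (ℝ × ℝ)).withDensity (fun p => (n p : ℝ≥0∞)) := by
    rw [gaussian_prod_eq_withDensity]
    rfl
  have step2 : ∫ p, F p ∂((gaussianReal 0 1).prod (gaussianReal 0 1))
      = ∫ p : ℝ × ℝ, (gaussianPDFReal 0 1 p.1 * gaussianPDFReal 0 1 p.2) * F p := by
    rw [hprod, integral_withDensity_eq_integral_smul hnm]
    congr 1
    ext p
    rw [NNReal.smul_def, NNReal.coe_mul, Real.coe_toNNReal _ (hpdf_nonneg _),
      Real.coe_toNNReal _ (hpdf_nonneg _), smul_eq_mul]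
  rw [step2]
  set G : ℝ → ℝ := fun θ => (min (|cos θ| - |r * sin θ + s * cos θ|) 0) ^ 2 with hG
  have hpdf : ∀ x : ℝ, gaussianPDFReal 0 1 x = (√(2*π))⁻¹ * Real.exp (-x^2/2) := by
    intro x
    rw [gaussianPDFReal]
    norm_num
  rw [← integral_comp_polarCoord_symm (fun p : ℝ × ℝ =>
    (gaussianPDFReal 0 1 p.1 * gaussianPDFReal 0 1 p.2) * F p)]
  rw [polarCoord_target]
  have step4 : ∫ p in Ioi (0:ℝ) ×ˢ Ioo (-π) π,
      p.1 • ((fun p : ℝ × ℝ =>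
        (gaussianPDFReal 0 1 p.1 * gaussianPDFReal 0 1 p.2) * F p) (polarCoord.symm p))
      = ∫ p in Ioi (0:ℝ) ×ˢ Ioo (-π) π,
        (p.1 ^ 3 * Real.exp (-p.1 ^ 2 / 2)) * ((2 * π)⁻¹ * G p.2) := by
    refine setIntegral_congr_fun (measurableSet_Ioi.prod measurableSet_Ioo) fun p hp => ?_
    have hρ : 0 < p.1 := hp.1
    rw [polarCoord_symm_apply, smul_eq_mul]
    dsimp only
    rw [hpdf, hpdf]
    have hab : (p.1 * cos p.2)^2 + (p.1 * sin p.2)^2 = p.1^2 := by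
      linear_combination p.1 ^ 2 * (sin_sq_add_cos_sq p.2)
    have hexp : Real.exp (-(p.1 * cos p.2)^2/2) * Real.exp (-(p.1 * sin p.2)^2/2)
        = Real.exp (-p.1^2/2) := by
      rw [← Real.exp_add]
      congr 1
      linarith
    have hs2 : ((√(2*π))⁻¹ : ℝ) * (√(2*π))⁻¹ = (2*π)⁻¹ := by
      rw [← mul_inv, mul_self_sqrt (by positivity)]
    have hFval : F (p.1 * cos p.2, p.1 * sin p.2) = p.1^2 * G p.2 := by
      simp only [hF, hG]
      have h1 : |p.1 * cos p.2| = p.1 * |cos p.2| := by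
        rw [abs_mul, abs_of_pos hρ]
      have h2 : r * (p.1 * sin p.2) + s * (p.1 * cos p.2)
          = p.1 * (r * sin p.2 + s * cos p.2) := by ring
      have h3 : |r * (p.1 * sin p.2) + s * (p.1 * cos p.2)|
          = p.1 * |r * sin p.2 + s * cos p.2| := by
        rw [h2, abs_mul, abs_of_pos hρ]
      have h4 : |p.1 * cos p.2| - |r * (p.1 * sin p.2) + s * (p.1 * cos p.2)|
          = p.1 * (|cos p.2| - |r * sin p.2 + s * cos p.2|) := by
        rw [h1, h3]; ring
      rw [h4, ← mul_zero p.1, ← mul_min_of_nonneg _ _ hρ.le]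
      ring
    rw [hFval]
    calc p.1 * ((√(2*π))⁻¹ * Real.exp (-(p.1 * cos p.2)^2/2)
          * ((√(2*π))⁻¹ * Real.exp (-(p.1 * sin p.2)^2/2)) * (p.1^2 * G p.2))
        = ((√(2*π))⁻¹ * (√(2*π))⁻¹)
          * (Real.exp (-(p.1 * cos p.2)^2/2) * Real.exp (-(p.1 * sin p.2)^2/2))
          * (p.1^3 * G p.2) := by ring
      _ = (2*π)⁻¹ * Real.exp (-p.1^2/2) * (p.1^3 * G p.2) := by rw [hs2, hexp]
      _ = p.1 ^ 3 * Real.exp (-p.1 ^ 2 / 2) * ((2 * π)⁻¹ * G p.2) := by ring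
  rw [step4]
  rw [Measure.volume_eq_prod, ← Measure.prod_restrict,
    integral_prod_mul (f := fun ρ : ℝ => ρ ^ 3 * Real.exp (-ρ ^ 2 / 2))
      (g := fun θ : ℝ => (2 * π)⁻¹ * G θ)]
  rw [radial_integral_eq, integral_const_mul, hG]
  rw [angular_full r s, angular_half r s, full_line r s hr]
  have hπ : (π : ℝ) ≠ 0 := pi_ne_zero
  field_simp
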